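/- Let η, ξ, μ, C, R_s > 0, R_f ≥ 0, and let x₂(q) be the smaller root of (λq+μ+ξ)x = λq+μx² for q ∈ [0,1], λ > 0. Then the expected social benefit Σ_{k=0}^∞ [η(1-x₂)x₂^k/(ξ+η)]·λq·[R_s·S^(k+1) + R_f(1 - S^(k+1))] - C·Σ_{k=0}^∞ k·η(1-x₂)x₂^k/(ξ+η), with S = μ/(μ+ξ) and x₂ = x₂(q), equals η·x₂·[μR_s(1-x₂) + ξR_f - C]/((ξ+η)(1-x₂)), using the identity λq = x₂[μ(1-x₂)+ξ]/(1-x₂). -/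

import Mathlib

set_option maxHeartbeats 1000000


theorem social_benefit_unobservable (lam μ ξ η C Rs Rf q x2 : ℝ)
    (hlam : 0 < lam) (hμ : 0 < μ) (hξ : 0 < ξ) (hη : 0 < η)
    (hC : 0 < C) (hRs : 0 < Rs) (hRf : 0 ≤ Rf)
    (hq0 : 0 ≤ q) (hq1 : q ≤ 1) (hx2a : 0 ≤ x2) (hx2b : x2 < 1)
    (hroot : (lam * q + μ + ξ) * x2 = lam * q + μ * x2 ^ 2) :
    (∑' k : ℕ, (η * (1 - x2) * x2 ^ k / (ξ + η)) * (lam * q) *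
        (Rs * (μ / (μ + ξ)) ^ (k + 1) + Rf * (1 - (μ / (μ + ξ)) ^ (k + 1))))
      - C * ∑' k : ℕ, (k : ℝ) * (η * (1 - x2) * x2 ^ k / (ξ + η))
    = η * x2 * (μ * Rs * (1 - x2) + ξ * Rf - C) / ((ξ + η) * (1 - x2)) := by
  have hμξ : 0 < μ + ξ := by linarith
  set S : ℝ := μ / (μ + ξ) with hSdef
  have hS0 : 0 ≤ S := div_nonneg hμ.le hμξ.le
  have hS1 : S < 1 := by rw [hSdef, div_lt_one hμξ]; linarith
  have hxS0 : 0 ≤ x2 * S := mul_nonneg hx2a hS0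
  have hxS1 : x2 * S < 1 := by nlinarith
  have hsum1 : Summable (fun k : ℕ => (x2 * S) ^ k) :=
    summable_geometric_of_lt_one hxS0 hxS1
  have hsum2 : Summable (fun k : ℕ => x2 ^ k) :=
    summable_geometric_of_lt_one hx2a hx2b
  have hgeo1 : (∑' k : ℕ, (x2 * S) ^ k) = (1 - x2 * S)⁻¹ :=
    tsum_geometric_of_lt_one hxS0 hxS1
  have hgeo2 : (∑' k : ℕ, x2 ^ k) = (1 - x2)⁻¹ :=
    tsum_geometric_of_lt_one hx2a hx2b
  have hx2n : ‖x2‖ < 1 := by rw [Real.norm_eq_abs, abs_of_nonneg hx2a]; exact hx2b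
  have hgeo3 : (∑' k : ℕ, (k : ℝ) * x2 ^ k) = x2 / (1 - x2) ^ 2 :=
    tsum_coe_mul_geometric_of_norm_lt_one hx2n
  have h1 : (∑' k : ℕ, (η * (1 - x2) * x2 ^ k / (ξ + η)) * (lam * q) *
        (Rs * S ^ (k + 1) + Rf * (1 - S ^ (k + 1))))
      = (η * (1 - x2) * (lam * q) * (Rs - Rf) * S / (ξ + η)) * (1 - x2 * S)⁻¹
        + (η * (1 - x2) * (lam * q) * Rf / (ξ + η)) * (1 - x2)⁻¹ := by
    rw [← hgeo1, ← hgeo2, ← tsum_mul_left, ← tsum_mul_left,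
      ← Summable.tsum_add (hsum1.mul_left _) (hsum2.mul_left _)]
    exact tsum_congr fun k => by rw [mul_pow]; ring
  have h2 : (∑' k : ℕ, (k : ℝ) * (η * (1 - x2) * x2 ^ k / (ξ + η)))
      = (η * (1 - x2) / (ξ + η)) * (x2 / (1 - x2) ^ 2) := by
    rw [← hgeo3, ← tsum_mul_left]
    exact tsum_congr fun k => by ring
  rw [h1, h2]
  have hlq : lam * q = x2 * (μ * (1 - x2) + ξ) / (1 - x2) := by
    have h1x : (1 - x2) ≠ 0 := by linarith
    field_simp
    nlinarith [hroot]
  have h1x : (1 - x2) ≠ 0 := by linarith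
  have hxSne : (1 - x2 * S) ≠ 0 := by nlinarith
  have hξη : (ξ + η) ≠ 0 := by positivity
  have hμξ' : (μ + ξ) ≠ 0 := by positivity
  have hM : (μ * (1 - x2) + ξ) ≠ 0 := by nlinarith
  have hinv : (1 - x2 * S)⁻¹ = (μ + ξ) / (μ * (1 - x2) + ξ) := by
    rw [hSdef]; rw [inv_eq_iff_eq_inv, inv_div]
    field_simp
    ring
  rw [hinv, hlq, hSdef]
  have hM' : (1 - x2) * μ + ξ ≠ 0 := by nlinarith
  field_simp
  ring
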